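/- (Lemma 6(b)) Fix integers n ≥ 2 and 1 ≤ m ≤ n−1, and reals p ∈ (0,1), p_e ≥ 0, x_S ∈ ℝ. Let y be the fully-connected age family with parameters (n, m, p, p_e, x_S) and y' the one with parameters (n, m+1, p, p_e, x_S). Then y'(k) ≤ y(k) for all 1 ≤ k ≤ n−m−1; i.e., the expected age of a block of k non-subscribing users is nonincreasing in the number m of subscribers. -/

import Mathlib

/-- A fully-connected age family with parameters `n`, `m`, `p`, `pe`, `xS`:
`y k` is the long-term expected version age of a block of `k` non-subscribing
users in a fully-connected gossip network of `n` users with `m` subscribers. -/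
def IsFCAgeFamily (n m : ℕ) (p pe xS : ℝ) (y : ℕ → ℝ) : Prop :=
  ∀ k : ℕ, 1 ≤ k → k ≤ n - m →
    y k * (1 - (1 - p) ^ (k * (n - k))) =
      pe + (∑ i ∈ Finset.Icc 1 (n - m - k),
        (Nat.choose (n - m - k) i : ℝ) * y (k + i) * (1 - (1 - p) ^ k) ^ i
          * (1 - p) ^ (k * (n - k - i)))
      + (1 - (1 - p) ^ (k * m)) * xS


lemma binom_id (q : ℝ) (k N m n : ℕ) (h : k + N + m = n) :
    ∑ i ∈ Finset.Icc 1 N, (N.choose i : ℝ) * (1 - q ^ k) ^ i * q ^ (k * (n - k - i))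
      = q ^ (k * m) - q ^ (k * (n - k)) := by
  have h1 : ∀ i ∈ Finset.Icc 1 N,
      (N.choose i : ℝ) * (1 - q ^ k) ^ i * q ^ (k * (n - k - i))
        = ((1 - q ^ k) ^ i * (q ^ k) ^ (N - i) * (N.choose i : ℝ)) * q ^ (k * m) := by
    intro i hi
    simp only [Finset.mem_Icc] at hi
    have : n - k - i = (N - i) + m := by omega
    rw [this, Nat.mul_add, pow_add, ← pow_mul]
    ring
  rw [Finset.sum_congr rfl h1, ← Finset.sum_mul]
  have hpow := add_pow (1 - q ^ k) (q ^ k) N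
  have hins : Finset.range (N + 1) = insert 0 (Finset.Icc 1 N) := by
    ext x; simp only [Finset.mem_range, Finset.mem_insert, Finset.mem_Icc]; omega
  rw [hins, Finset.sum_insert (by simp)] at hpow
  simp only [pow_zero, Nat.sub_zero, Nat.choose_zero_right, Nat.cast_one, one_mul, mul_one] at hpow
  have hsum : ∑ i ∈ Finset.Icc 1 N, (1 - q ^ k) ^ i * (q ^ k) ^ (N - i) * (N.choose i : ℝ)
      = 1 - (q ^ k) ^ N := by
    have : (1 - q ^ k + q ^ k) ^ N = (1:ℝ) := by norm_num
    rw [this] at hpow; linarith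
  rw [hsum]
  have h2 : n - k = N + m := by omega
  rw [h2, Nat.mul_add, pow_add, ← pow_mul]
  ring

lemma zform (n m : ℕ) (p pe xS : ℝ) (y : ℕ → ℝ) (hy : IsFCAgeFamily n m p pe xS y)
    (hmn : m ≤ n) (k : ℕ) (hk : 1 ≤ k) (hkn : k ≤ n - m) :
    (y k - xS) * (1 - (1 - p) ^ (k * (n - k))) =
      pe + ∑ i ∈ Finset.Icc 1 (n - m - k),
        (Nat.choose (n - m - k) i : ℝ) * (y (k + i) - xS) * (1 - (1 - p) ^ k) ^ i
          * (1 - p) ^ (k * (n - k - i)) := by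
  have hA := binom_id (1 - p) k (n - m - k) m n (by omega)
  have hexp : ∀ i ∈ Finset.Icc 1 (n - m - k),
      (Nat.choose (n - m - k) i : ℝ) * (y (k + i) - xS) * (1 - (1 - p) ^ k) ^ i
          * (1 - p) ^ (k * (n - k - i))
        = (Nat.choose (n - m - k) i : ℝ) * y (k + i) * (1 - (1 - p) ^ k) ^ i
            * (1 - p) ^ (k * (n - k - i))
          - xS * ((Nat.choose (n - m - k) i : ℝ) * (1 - (1 - p) ^ k) ^ i
            * (1 - p) ^ (k * (n - k - i))) := by
    intro i _; ring
  rw [Finset.sum_congr rfl hexp, Finset.sum_sub_distrib, ← Finset.mul_sum, hA]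
  have := hy k hk hkn
  linarith [this]

lemma fc_nonneg (n m : ℕ) (p pe xS : ℝ) (hp0 : 0 < p) (hp1 : p < 1) (hpe : 0 ≤ pe)
    (hm : 1 ≤ m) (hmn : m ≤ n) (y : ℕ → ℝ) (hy : IsFCAgeFamily n m p pe xS y) :
    ∀ k : ℕ, 1 ≤ k → k ≤ n - m → xS ≤ y k := by
  have hq0 : (0:ℝ) ≤ 1 - p := by linarith
  have hq1 : 1 - p < 1 := by linarith
  have key : ∀ d k, 1 ≤ k → k ≤ n - m → n - m - k ≤ d → xS ≤ y k := by
    intro d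
    induction d with
    | zero =>
      intro k hk1 hk2 hd
      have hz := zform n m p pe xS y hy hmn k hk1 hk2
      have hNz : n - m - k = 0 := by omega
      rw [hNz] at hz
      simp only [Finset.Icc_self, Finset.Icc_eq_empty_of_lt (by norm_num : (1:ℕ) > 0),
        Finset.sum_empty] at hz
      have hD : (0:ℝ) < 1 - (1 - p) ^ (k * (n - k)) := by
        have hkn : k * (n - k) ≠ 0 := by
          simp only [Nat.mul_ne_zero_iff]; omega
        have : (1 - p) ^ (k * (n - k)) < 1 := pow_lt_one₀ hq0 hq1 hkn
        linarith
      nlinarith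
    | succ d ih =>
      intro k hk1 hk2 hd
      have hz := zform n m p pe xS y hy hmn k hk1 hk2
      have hD : (0:ℝ) < 1 - (1 - p) ^ (k * (n - k)) := by
        have hkn : k * (n - k) ≠ 0 := by
          have : k ≤ n - 1 := by omega
          simp only [Nat.mul_ne_zero_iff]; omega
        have : (1 - p) ^ (k * (n - k)) < 1 := pow_lt_one₀ hq0 hq1 hkn
        linarith
      have hsum : (0:ℝ) ≤ ∑ i ∈ Finset.Icc 1 (n - m - k),
          (Nat.choose (n - m - k) i : ℝ) * (y (k + i) - xS) * (1 - (1 - p) ^ k) ^ i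
            * (1 - p) ^ (k * (n - k - i)) := by
        apply Finset.sum_nonneg
        intro i hi
        simp only [Finset.mem_Icc] at hi
        have hyi : xS ≤ y (k + i) := ih (k + i) (by omega) (by omega) (by omega)
        have ha : (0:ℝ) ≤ 1 - (1 - p) ^ k := by
          have : (1 - p) ^ k ≤ 1 := pow_le_one₀ hq0 (by linarith)
          linarith
        exact mul_nonneg (mul_nonneg (mul_nonneg (Nat.cast_nonneg _) (by linarith))
          (pow_nonneg ha i)) (pow_nonneg hq0 _)
      nlinarith
  intro k hk1 hk2
  exact key (n - m - k) k hk1 hk2 le_rfl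

/-- Lemma 6(b): the expected age of a block of `k` non-subscribing
users is nonincreasing in the number of subscribers: `y'(k) ≤ y(k)` where `y` has
`m` subscribers and `y'` has `m + 1` subscribers. -/
theorem fcAgeFamily_antitone_in_m (n m : ℕ) (hn : 2 ≤ n) (hm1 : 1 ≤ m)
    (hmn : m ≤ n - 1) (p pe xS : ℝ) (hp0 : 0 < p) (hp1 : p < 1) (hpe : 0 ≤ pe)
    (y y' : ℕ → ℝ)
    (hy : IsFCAgeFamily n m p pe xS y)
    (hy' : IsFCAgeFamily n (m + 1) p pe xS y') :
    ∀ k : ℕ, 1 ≤ k → k ≤ n - m - 1 → y' k ≤ y k := by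
  have hq0 : (0:ℝ) ≤ 1 - p := by linarith
  have hq1 : 1 - p < 1 := by linarith
  have hynn := fc_nonneg n m p pe xS hp0 hp1 hpe hm1 (by omega) y hy
  have hy'nn := fc_nonneg n (m + 1) p pe xS hp0 hp1 hpe (by omega) (by omega) y' hy'
  have step : ∀ k, (∀ j, 1 ≤ j → j ≤ n - m - 1 → k < j → y' j ≤ y j) →
      1 ≤ k → k ≤ n - m - 1 → y' k ≤ y k := by
    intro k IH hk1 hk2
    have hz := zform n m p pe xS y hy (by omega) k hk1 (by omega)
    have hz' := zform n (m + 1) p pe xS y' hy' (by omega) k hk1 (by omega)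
    rw [show n - (m + 1) - k = n - m - k - 1 from by omega] at hz'
    have hD : (0:ℝ) < 1 - (1 - p) ^ (k * (n - k)) := by
      have hkn : k * (n - k) ≠ 0 := by
        simp only [Nat.mul_ne_zero_iff]; omega
      have : (1 - p) ^ (k * (n - k)) < 1 := pow_lt_one₀ hq0 hq1 hkn
      linarith
    have ha : (0:ℝ) ≤ 1 - (1 - p) ^ k := by
      have : (1 - p) ^ k ≤ 1 := pow_le_one₀ hq0 (by linarith)
      linarith
    set N := n - m - k with hN
    have hN1 : 1 ≤ N := by omega
    have hchain :
        (∑ i ∈ Finset.Icc 1 (N - 1),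
          (Nat.choose (N - 1) i : ℝ) * (y' (k + i) - xS) * (1 - (1 - p) ^ k) ^ i
            * (1 - p) ^ (k * (n - k - i)))
        ≤ ∑ i ∈ Finset.Icc 1 N,
          (Nat.choose N i : ℝ) * (y (k + i) - xS) * (1 - (1 - p) ^ k) ^ i
            * (1 - p) ^ (k * (n - k - i)) := by
      calc (∑ i ∈ Finset.Icc 1 (N - 1),
          (Nat.choose (N - 1) i : ℝ) * (y' (k + i) - xS) * (1 - (1 - p) ^ k) ^ i
            * (1 - p) ^ (k * (n - k - i)))
          ≤ ∑ i ∈ Finset.Icc 1 (N - 1),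
            (Nat.choose N i : ℝ) * (y (k + i) - xS) * (1 - (1 - p) ^ k) ^ i
              * (1 - p) ^ (k * (n - k - i)) := by
            apply Finset.sum_le_sum
            intro i hi
            simp only [Finset.mem_Icc] at hi
            have hyy : y' (k + i) ≤ y (k + i) :=
              IH (k + i) (by omega) (by omega) (by omega)
            have hyx : xS ≤ y' (k + i) := hy'nn (k + i) (by omega) (by omega)
            have hcc : ((N - 1).choose i : ℝ) ≤ (N.choose i : ℝ) := by
              exact_mod_cast Nat.choose_le_choose i (Nat.sub_le N 1)
            apply mul_le_mul_of_nonneg_right _ (pow_nonneg hq0 _)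
            apply mul_le_mul_of_nonneg_right _ (pow_nonneg ha _)
            apply mul_le_mul hcc (by linarith) (by linarith) (Nat.cast_nonneg _)
        _ ≤ ∑ i ∈ Finset.Icc 1 N,
            (Nat.choose N i : ℝ) * (y (k + i) - xS) * (1 - (1 - p) ^ k) ^ i
              * (1 - p) ^ (k * (n - k - i)) := by
            apply Finset.sum_le_sum_of_subset_of_nonneg
              (Finset.Icc_subset_Icc_right (Nat.sub_le N 1))
            intro i hi _
            simp only [Finset.mem_Icc] at hi
            have hyx : xS ≤ y (k + i) := hynn (k + i) (by omega) (by omega)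
            exact mul_nonneg (mul_nonneg (mul_nonneg (Nat.cast_nonneg _) (by linarith))
              (pow_nonneg ha i)) (pow_nonneg hq0 _)
    have hle : (y' k - xS) * (1 - (1 - p) ^ (k * (n - k)))
        ≤ (y k - xS) * (1 - (1 - p) ^ (k * (n - k))) := by
      rw [hz, hz']; linarith
    have := (mul_le_mul_iff_of_pos_right hD).mp hle
    linarith
  have key : ∀ d k, 1 ≤ k → k ≤ n - m - 1 → n - m - 1 - k ≤ d → y' k ≤ y k := by
    intro d
    induction d with
    | zero =>
      intro k hk1 hk2 hd
      exact step k (fun j _ hj2 hj3 => absurd (by omega : False) id) hk1 hk2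
    | succ d ih =>
      intro k hk1 hk2 hd
      exact step k (fun j hj1 hj2 hj3 => ih j hj1 hj2 (by omega)) hk1 hk2
  intro k hk1 hk2
  exact key (n - m - 1 - k) k hk1 hk2 le_rfl
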